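/- Let Γ be a positive, decreasing, continuously differentiable function on [0,∞) with ∫₀^∞ t^d Γ(t) dt < ∞ and t^{d-1}Γ(t) → 0 as t → ∞, for some integer d ≥ 0. Write g(y) = -Γ'(y)/Γ(y) and G(y) = ∫_y^∞ t^d Γ(t) dt. If g(y) ≥ α y for all y > ȳ (where α > 0, ȳ ≥ 0), then for every ε > 0 and all y > max(ȳ, sqrt(|d-1| (1/(ε α²) + 1/α))), one has G(y) ≤ (1/α + ε) y^{d-1} Γ(y). -/

import Mathlib

open MeasureTheory Set Filter

/-- Gaussian-type estimate, upper bound version (Lemma A.1(i)). -/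
theorem stmt0 (d : ℕ) (Γ Γ' : ℝ → ℝ)
    (hpos : ∀ t : ℝ, 0 ≤ t → 0 < Γ t)
    (hanti : AntitoneOn Γ (Ici 0))
    (hderiv : ∀ t : ℝ, 0 ≤ t → HasDerivAt Γ (Γ' t) t)
    (hcont : ContinuousOn Γ' (Ici 0))
    (hint : IntegrableOn (fun t => t ^ (d : ℝ) * Γ t) (Ioi 0))
    (hlim : Tendsto (fun t => t ^ ((d : ℝ) - 1) * Γ t) atTop (nhds 0))
    (α ybar : ℝ) (hα : 0 < α) (hybar : 0 ≤ ybar)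
    (hg : ∀ y : ℝ, ybar < y → α * y ≤ -Γ' y / Γ y) :
    ∀ ε : ℝ, 0 < ε → ∀ y : ℝ,
      max ybar (Real.sqrt (|(d : ℝ) - 1| * (1 / (ε * α ^ 2) + 1 / α))) < y →
      (∫ t in Ioi y, t ^ (d : ℝ) * Γ t) ≤ (1 / α + ε) * y ^ ((d : ℝ) - 1) * Γ y := by
  intro ε hε y hy
  set c : ℝ := (d : ℝ) - 1 with hc
  have hyb : ybar < y := lt_of_le_of_lt (le_max_left _ _) hy
  have hy0 : (0 : ℝ) < y :=
    lt_of_le_of_lt ((Real.sqrt_nonneg _).trans (le_max_right _ _)) hy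
  have hy2 : |c| * (1 / (ε * α ^ 2) + 1 / α) < y ^ 2 :=
    (Real.sqrt_lt' hy0).mp (lt_of_le_of_lt (le_max_right _ _) hy)
  -- basic functions
  set f₀ : ℝ → ℝ := fun t => t ^ (d : ℝ) * Γ t with hf₀
  set f₂ : ℝ → ℝ := fun t => t ^ (c - 1) * Γ t with hf₂
  set w : ℝ → ℝ := fun t => t ^ c * (-Γ' t) with hw
  have hf₀int : IntegrableOn f₀ (Ioi y) := hint.mono_set (Ioi_subset_Ioi hy0.le)
  -- Γ' is negative beyond ybar
  have hΓ'neg : ∀ t : ℝ, y < t → α * t * Γ t ≤ -Γ' t := by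
    intro t ht
    have h0t : (0 : ℝ) < t := hy0.trans ht
    have := hg t (hyb.trans ht)
    exact (le_div_iff₀ (hpos t h0t.le)).mp this
  -- continuity of f₂ on Ioi 0
  have hf₂cont : ContinuousOn f₂ (Ioi 0) := by
    intro s hs
    exact ((Real.continuousAt_rpow_const s (c - 1) (Or.inl (ne_of_gt hs))).mul
      ((hderiv s (le_of_lt hs)).continuousAt)).continuousWithinAt
  -- integrability of f₂ on Ioi y via comparison with f₀ / y^2
  have hf₂nonneg : ∀ s ∈ Ioi y, 0 ≤ f₂ s := by
    intro s hs
    have h0s : (0 : ℝ) < s := hy0.trans hs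
    exact mul_nonneg (Real.rpow_nonneg h0s.le _) (hpos s h0s.le).le
  have hf₂le : ∀ s ∈ Ioi y, f₂ s ≤ f₀ s / y ^ 2 := by
    intro s hs
    have h0s : (0 : ℝ) < s := hy0.trans hs
    have h1 : y ^ 2 ≤ s ^ (2 : ℝ) := by
      rw [show ((2:ℝ)) = ((2:ℕ):ℝ) by norm_num, Real.rpow_natCast]
      exact pow_le_pow_left₀ hy0.le (le_of_lt hs) 2
    have h2 : s ^ (c - 1) * s ^ (2 : ℝ) = s ^ ((d : ℝ)) := by
      rw [← Real.rpow_add h0s]; congr 1; rw [hc]; ring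
    have h3 : s ^ (c - 1) * y ^ 2 ≤ s ^ ((d : ℝ)) := by
      calc s ^ (c - 1) * y ^ 2 ≤ s ^ (c - 1) * s ^ (2:ℝ) :=
            mul_le_mul_of_nonneg_left h1 (Real.rpow_nonneg h0s.le _)
        _ = s ^ ((d : ℝ)) := h2
    rw [le_div_iff₀ (by positivity : (0:ℝ) < y ^ 2)]
    have hΓs := (hpos s h0s.le).le
    calc f₂ s * y ^ 2 = (s ^ (c-1) * y ^ 2) * Γ s := by rw [hf₂]; ring
      _ ≤ s ^ ((d:ℝ)) * Γ s := mul_le_mul_of_nonneg_right h3 hΓs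
      _ = f₀ s := rfl
  have hf₂int : IntegrableOn f₂ (Ioi y) := by
    refine Integrable.mono' (hf₀int.div_const (y ^ 2))
      ((hf₂cont.mono (Ioi_subset_Ioi hy0.le)).aestronglyMeasurable measurableSet_Ioi) ?_
    refine (ae_restrict_iff' measurableSet_Ioi).mpr (ae_of_all _ fun s hs => ?_)
    rw [Real.norm_eq_abs, abs_of_nonneg (hf₂nonneg s hs)]
    exact hf₂le s hs
  set I0 : ℝ := ∫ t in Ioi y, f₀ t with hI0
  set I2 : ℝ := ∫ t in Ioi y, f₂ t with hI2
  have hI0nonneg : 0 ≤ I0 := by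
    refine setIntegral_nonneg measurableSet_Ioi fun s hs => ?_
    have h0s : (0 : ℝ) < s := hy0.trans hs
    exact mul_nonneg (Real.rpow_nonneg h0s.le _) (hpos s h0s.le).le
  have hI2nonneg : 0 ≤ I2 := setIntegral_nonneg measurableSet_Ioi hf₂nonneg
  have hI2le : I2 ≤ I0 / y ^ 2 := by
    have := setIntegral_mono_on hf₂int (hf₀int.div_const (y ^ 2))
      measurableSet_Ioi hf₂le
    rwa [integral_div] at this
  -- the primitive of f₂
  set P : ℝ → ℝ := fun t => ∫ s in y..t, f₂ s with hP
  have hPderiv : ∀ t : ℝ, 0 < t → HasDerivAt P (f₂ t) t := by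
    intro t ht
    refine intervalIntegral.integral_hasDerivAt_right ?_ ?_ ?_
    · refine (hf₂cont.mono ?_).intervalIntegrable
      intro s hs
      rcases le_total y t with h | h
      · rw [uIcc_of_le h] at hs; exact lt_of_lt_of_le hy0 hs.1
      · rw [uIcc_of_ge h] at hs; exact lt_of_lt_of_le ht hs.1
    · exact ContinuousOn.stronglyMeasurableAtFilter isOpen_Ioi hf₂cont t ht
    · exact (Real.continuousAt_rpow_const t (c - 1) (Or.inl (ne_of_gt ht))).mul
        ((hderiv t ht.le).continuousAt)
  -- integration by parts function
  set h : ℝ → ℝ := fun t => -(t ^ c * Γ t) + c * P t with hh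
  have hhderiv : ∀ t ∈ Ici y, HasDerivAt h (w t) t := by
    intro t ht
    have h0t : (0 : ℝ) < t := lt_of_lt_of_le hy0 ht
    have hu : HasDerivAt (fun s : ℝ => s ^ c * Γ s)
        (c * t ^ (c - 1) * Γ t + t ^ c * Γ' t) t := by
      have h1 := (Real.hasDerivAt_rpow_const (p := c) (Or.inl (ne_of_gt h0t))).mul
        (hderiv t h0t.le)
      convert h1 using 1
      try ring
      all_goals rfl
    have h2 := hu.neg.add ((hPderiv t h0t).const_mul c)
    convert h2 using 1
    all_goals try rfl
    simp only [hw, hf₂]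
    ring
  have hwnonneg : ∀ t ∈ Ioi y, 0 ≤ w t := by
    intro t ht
    have h0t : (0 : ℝ) < t := hy0.trans ht
    have h1 := hΓ'neg t ht
    have h2 : 0 ≤ -Γ' t := le_trans (mul_nonneg (mul_nonneg hα.le h0t.le) (hpos t h0t.le).le) h1
    exact mul_nonneg (Real.rpow_nonneg h0t.le _) h2
  have htend : Tendsto h atTop (nhds (-0 + c * I2)) := by
    refine Tendsto.add (Tendsto.neg ?_) (Tendsto.const_mul c ?_)
    · exact hlim
    · have := intervalIntegral_tendsto_integral_Ioi (μ := volume) (b := fun i : ℝ => i)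
        y hf₂int tendsto_id
      exact this
  have hwint : IntegrableOn w (Ioi y) :=
    integrableOn_Ioi_deriv_of_nonneg' hhderiv hwnonneg htend
  have hweq : ∫ t in Ioi y, w t = c * I2 + y ^ c * Γ y := by
    have := integral_Ioi_of_hasDerivAt_of_nonneg' hhderiv hwnonneg htend
    rw [this, hh]
    simp [hP, intervalIntegral.integral_same]
  -- comparison : α * f₀ ≤ w on Ioi y
  have hptwise : ∀ t ∈ Ioi y, α * f₀ t ≤ w t := by
    intro t ht
    have h0t : (0 : ℝ) < t := hy0.trans ht
    have h1 : t ^ ((d : ℝ)) = t ^ c * t := by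
      rw [← Real.rpow_add_one (ne_of_gt h0t)]; congr 1; rw [hc]; ring
    have h2 := hΓ'neg t ht
    calc α * f₀ t = t ^ c * (α * t * Γ t) := by rw [hf₀]; simp only; rw [h1]; ring
      _ ≤ t ^ c * (-Γ' t) := mul_le_mul_of_nonneg_left h2 (Real.rpow_nonneg h0t.le _)
      _ = w t := rfl
  have hmono : α * I0 ≤ ∫ t in Ioi y, w t := by
    have := setIntegral_mono_on (hf₀int.const_mul α) hwint measurableSet_Ioi hptwise
    rwa [integral_const_mul] at this
  -- put things together
  set Q : ℝ := y ^ c * Γ y with hQ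
  have hQpos : 0 < Q := mul_pos (Real.rpow_pos_of_pos hy0 _) (hpos y hy0.le)
  have hmain : α * I0 ≤ |c| * I2 + Q := by
    have h1 : c * I2 ≤ |c| * I2 := mul_le_mul_of_nonneg_right (le_abs_self c) hI2nonneg
    rw [hweq] at hmono; linarith
  have hI2b : I2 * y ^ 2 ≤ I0 := by
    have := mul_le_mul_of_nonneg_right hI2le (by positivity : (0:ℝ) ≤ y ^ 2)
    rwa [div_mul_cancel₀ _ (by positivity : (y:ℝ) ^ 2 ≠ 0)] at this
  have e1 : α * I0 * y ^ 2 ≤ Q * y ^ 2 + |c| * I0 := by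
    nlinarith [mul_le_mul_of_nonneg_right hmain (by positivity : (0:ℝ) ≤ y ^ 2),
      mul_le_mul_of_nonneg_left hI2b (abs_nonneg c)]
  have e2 : |c| * (1 + ε * α) < ε * α ^ 2 * y ^ 2 := by
    have h := mul_lt_mul_of_pos_left hy2 (show (0:ℝ) < ε * α ^ 2 by positivity)
    calc |c| * (1 + ε * α) = ε * α ^ 2 * (|c| * (1 / (ε * α ^ 2) + 1 / α)) := by
          field_simp
      _ < ε * α ^ 2 * y ^ 2 := h
  have goal' : α * I0 ≤ (1 + ε * α) * Q := by
    nlinarith [mul_le_mul_of_nonneg_left e2.le hI0nonneg,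
      mul_le_mul_of_nonneg_left e1 (show (0:ℝ) ≤ 1 + ε * α by positivity),
      (show (0:ℝ) < y ^ 2 by positivity), hQpos, hI0nonneg, mul_pos hε hα]
  have hfinal : I0 ≤ (1 / α + ε) * Q := by
    rw [show (1/α + ε) = (1 + ε * α) / α by field_simp, div_mul_eq_mul_div,
      le_div_iff₀ hα]
    linarith
  calc (∫ t in Ioi y, t ^ (d : ℝ) * Γ t) = I0 := rfl
    _ ≤ (1 / α + ε) * Q := hfinal
    _ = (1 / α + ε) * y ^ ((d : ℝ) - 1) * Γ y := by rw [hQ, ← hc, mul_assoc]
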